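/- The real 2×2 matrix M = [[−1/β₁², β·β₂/β₁²], [β·β₂/β₁², 1/β₁²]] is orthogonal, i.e. Mᵀ·M is the identity matrix. (This is the unitarity of the (b,2)-cell matrix of the biunitary connection κ for the AH+1 subfactor.) -/

import Mathlib

open Matrix

/-- β = √((7+√17)/2) -/
noncomputable def β : ℝ := Real.sqrt ((7 + Real.sqrt 17) / 2)

/-- β₁ = √((5+√17)/2) -/
noncomputable def β₁ : ℝ := Real.sqrt ((5 + Real.sqrt 17) / 2)

/-- β₂ = √((3+√17)/2) -/
noncomputable def β₂ : ℝ := Real.sqrt ((3 + Real.sqrt 17) / 2)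

/-- The (b,2)-cell matrix of the biunitary connection κ for AH+1. -/
noncomputable def M : Matrix (Fin 2) (Fin 2) ℝ :=
  !![-1 / β₁ ^ 2, β * β₂ / β₁ ^ 2;
     β * β₂ / β₁ ^ 2, 1 / β₁ ^ 2]

lemma s17 : Real.sqrt 17 ^ 2 = 17 := Real.sq_sqrt (by norm_num)

lemma s17pos : (0:ℝ) < Real.sqrt 17 := Real.sqrt_pos.mpr (by norm_num)

lemma βsq : β ^ 2 = (7 + Real.sqrt 17) / 2 :=
  Real.sq_sqrt (by positivity)

lemma β₁sq : β₁ ^ 2 = (5 + Real.sqrt 17) / 2 :=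
  Real.sq_sqrt (by positivity)

lemma β₂sq : β₂ ^ 2 = (3 + Real.sqrt 17) / 2 :=
  Real.sq_sqrt (by positivity)

lemma β₁sq_pos : (0:ℝ) < β₁ ^ 2 := by
  rw [β₁sq]; positivity

/-- The (b,2)-cell matrix of the connection κ for AH+1 is orthogonal. -/
theorem stmt_0 : Mᵀ * M = (1 : Matrix (Fin 2) (Fin 2) ℝ) := by
  have h1 := β₁sq_pos.ne'
  have h4 : β₁ ≠ 0 := fun h => h1 (by rw [h]; norm_num)
  have key : β ^ 2 * β₂ ^ 2 + 1 = β₁ ^ 2 * β₁ ^ 2 := by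
    rw [βsq, β₁sq, β₂sq]
    have := s17
    nlinarith [this]
  ext i j
  fin_cases i <;> fin_cases j <;>
    simp [M, Matrix.mul_apply, Fin.sum_univ_succ, Matrix.one_apply] <;>
    field_simp <;> nlinarith [key]
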